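/- Let α ∈ (0,1) and set θ = e^{-2(1-α)/α}. Then for all x ∈ (0,1), x/(x + (1-x)α) ≤ (1 - θ^x)/(1 - θ). -/

import Mathlib

open Real

theorem stmt_4 (α : ℝ) (hα0 : 0 < α) (hα1 : α < 1) (x : ℝ) (hx0 : 0 < x) (hx1 : x < 1) :
    x / (x + (1 - x) * α) ≤
      (1 - Real.exp (-2 * (1 - α) / α) ^ x) / (1 - Real.exp (-2 * (1 - α) / α)) := by
  set c : ℝ := 2 * (1 - α) / α with hc_def
  have hc : 0 < c := div_pos (by linarith) hα0
  have hcα : c * α = 2 * (1 - α) := by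
    rw [hc_def, div_mul_cancel₀ _ hα0.ne']
  -- rewrite rpow
  have hrpow : Real.exp (-2 * (1 - α) / α) ^ x = Real.exp (-(c * x)) := by
    rw [show (-2 : ℝ) * (1 - α) / α = -c by rw [hc_def]; ring, ← Real.exp_mul]
    ring_nf
  rw [hrpow, show (-2 : ℝ) * (1 - α) / α = -c by rw [hc_def]; ring]
  set h : ℝ → ℝ := fun y => (1 - Real.exp (-(c * y))) * (α + (1 - α) * y) - y * (1 - Real.exp (-c)) with hh
  set g : ℝ → ℝ := fun y =>
    c * Real.exp (-(c * y)) * (α + (1 - α) * y) + (1 - Real.exp (-(c * y))) * (1 - α)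
      - (1 - Real.exp (-c)) with hg
  have hd1 : ∀ y : ℝ, HasDerivAt h (g y) y := by
    intro y
    have e1 : HasDerivAt (fun y : ℝ => -(c * y)) (-c) y := by
      exact ((hasDerivAt_id' y).const_mul c).neg.congr_deriv (by ring)
    have e2 := e1.exp
    have e3 : HasDerivAt (fun y : ℝ => 1 - Real.exp (-(c * y)))
        (c * Real.exp (-(c * y))) y := by
      exact (e2.const_sub 1).congr_deriv (by ring)
    have e4 : HasDerivAt (fun y : ℝ => α + (1 - α) * y) (1 - α) y := by
      simpa using ((hasDerivAt_id y).const_mul (1 - α)).const_add α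
    have e5 : HasDerivAt (fun y : ℝ => y * (1 - Real.exp (-c))) (1 - Real.exp (-c)) y := by
      simpa using (hasDerivAt_id y).mul_const (1 - Real.exp (-c))
    have := (e3.mul e4).sub e5
    convert this using 1 <;> rfl
  have hderiv : deriv h = g := funext fun y => (hd1 y).deriv
  have hd2 : ∀ y : ℝ, HasDerivAt g
      (c * Real.exp (-(c * y)) * (2 * (1 - α) - c * (α + (1 - α) * y))) y := by
    intro y
    have e1 : HasDerivAt (fun y : ℝ => -(c * y)) (-c) y := by
      exact ((hasDerivAt_id' y).const_mul c).neg.congr_deriv (by ring)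
    have e2 := e1.exp
    have e2' : HasDerivAt (fun y : ℝ => c * Real.exp (-(c * y)))
        (c * (Real.exp (-(c * y)) * -c)) y := e2.const_mul c
    have e3 : HasDerivAt (fun y : ℝ => 1 - Real.exp (-(c * y)))
        (c * Real.exp (-(c * y))) y := by
      exact (e2.const_sub 1).congr_deriv (by ring)
    have e4 : HasDerivAt (fun y : ℝ => α + (1 - α) * y) (1 - α) y := by
      simpa using ((hasDerivAt_id y).const_mul (1 - α)).const_add α
    have := ((e2'.mul e4).add (e3.mul (hasDerivAt_const y (1 - α)))).sub
      (hasDerivAt_const y (1 - Real.exp (-c)))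
    exact this.congr_deriv (by ring)
  have hconc : ConcaveOn ℝ (Set.Icc (0 : ℝ) 1) h := by
    apply concaveOn_of_deriv2_nonpos' (convex_Icc 0 1)
    · exact fun y _ => (hd1 y).differentiableAt.differentiableWithinAt
    · rw [hderiv]
      exact fun y _ => (hd2 y).differentiableAt.differentiableWithinAt
    · intro y hy
      have : deriv^[2] h y = c * Real.exp (-(c * y)) * (2 * (1 - α) - c * (α + (1 - α) * y)) := by
        simp only [Function.iterate_succ, Function.iterate_zero, Function.comp_apply, id_eq,
          hderiv]
        exact (hd2 y).deriv
      rw [this]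
      have h1 : 2 * (1 - α) - c * (α + (1 - α) * y) = -(c * (1 - α) * y) := by
        have : c * (α + (1 - α) * y) = c * α + c * (1 - α) * y := by ring
        rw [this, hcα]; ring
      rw [h1]
      have hnn : 0 ≤ c * (1 - α) * y :=
        mul_nonneg (mul_nonneg hc.le (by linarith)) hy.1
      nlinarith [mul_nonneg (mul_pos hc (Real.exp_pos (-(c * y)))).le hnn]
  have h0 : h 0 = 0 := by simp [hh]
  have h1 : h 1 = 0 := by simp [hh]
  have key : 0 ≤ h x := by
    have := hconc.2 (Set.mem_Icc.2 ⟨le_refl 0, zero_le_one⟩)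
      (Set.mem_Icc.2 ⟨zero_le_one, le_refl 1⟩) (by linarith : (0:ℝ) ≤ 1 - x)
      (le_of_lt hx0) (by ring)
    simpa [h0, h1, smul_eq_mul] using this
  have hden1 : 0 < x + (1 - x) * α := by nlinarith
  have hden2 : 0 < 1 - Real.exp (-c) := by
    have : Real.exp (-c) < 1 := Real.exp_lt_one_iff.2 (by linarith)
    linarith
  rw [div_le_div_iff₀ hden1 hden2]
  have hx' : h x = (1 - Real.exp (-(c * x))) * (α + (1 - α) * x) - x * (1 - Real.exp (-c)) := rfl
  nlinarith [key]
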